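/- arXiv:0902.4719 — 5 statements merged into one kernel-verified Lean document; each statement's English description precedes it below -/
import Mathlib

section
/- Let H be a complex Hilbert space, B a topological space, and A : B → B(H) a map that is continuous for the operator-norm topology such that each A_x is a self-adjoint Fredholm operator and the function x ↦ dim ker(A_x) is locally constant on B. Then the map x ↦ p_x, where p_x is the orthogonal projection of H onto ker(A_x), is continuous for the operator-norm topology. -/
open Module
open ContinuousLinearMap hiding IsFredholm
open Filter Topology

/-- Distance minimality of orthogonal projection, inequality form. -/
lemma dist_orthProj_le' {H : Type*} [NormedAddCommGroup H] [InnerProductSpace ℂ H]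
    (K : Submodule ℂ H) [Submodule.HasOrthogonalProjection K] (y w : H) (hw : w ∈ K) :
    ‖y - (Submodule.orthogonalProjectionOnto K y : H)‖ ≤ ‖y - w‖ := by
  rw [← Submodule.starProjection_apply, Submodule.starProjection_minimal]
  exact ciInf_le ⟨0, by rintro b ⟨x, rfl⟩; exact norm_nonneg _⟩ (⟨w, hw⟩ : K)

/-- Key two-projection bound. -/
lemma proj_dist_bound {H : Type*} [NormedAddCommGroup H] [InnerProductSpace ℂ H] [CompleteSpace H]
    (K L : Submodule ℂ H) [FiniteDimensional ℂ K] [FiniteDimensional ℂ L]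
    (hdim : finrank ℂ K = finrank ℂ L) {a : ℝ} (ha0 : 0 ≤ a) (ha : a < 1)
    (hgap : ∀ u ∈ L, ‖u - (Submodule.orthogonalProjectionOnto K u : H)‖ ≤ a * ‖u‖) :
    ‖K.subtypeL.comp (Submodule.orthogonalProjectionOnto K) - L.subtypeL.comp (Submodule.orthogonalProjectionOnto L)‖
      ≤ a + a / (1 - a) := by
  haveI : CompleteSpace K := FiniteDimensional.complete ℂ K
  haveI : CompleteSpace L := FiniteDimensional.complete ℂ L
  set P : H →L[ℂ] H := K.subtypeL.comp (Submodule.orthogonalProjectionOnto K) with hP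
  set Q : H →L[ℂ] H := L.subtypeL.comp (Submodule.orthogonalProjectionOnto L) with hQ
  have hPv : ∀ v : H, P v = (Submodule.orthogonalProjectionOnto K v : H) := fun v => rfl
  have hQv : ∀ v : H, Q v = (Submodule.orthogonalProjectionOnto L v : H) := fun v => rfl
  have hPnorm : ∀ v : H, ‖P v‖ ≤ ‖v‖ := by
    intro v
    rw [hPv]
    calc ‖(Submodule.orthogonalProjectionOnto K v : H)‖ = ‖Submodule.orthogonalProjectionOnto K v‖ := rfl
      _ ≤ ‖Submodule.orthogonalProjectionOnto K‖ * ‖v‖ := le_opNorm _ _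
      _ ≤ 1 * ‖v‖ := by gcongr; exact Submodule.orthogonalProjection_norm_le K
      _ = ‖v‖ := one_mul _
  have hQnorm : ∀ v : H, ‖Q v‖ ≤ ‖v‖ := by
    intro v
    rw [hQv]
    calc ‖(Submodule.orthogonalProjectionOnto L v : H)‖ = ‖Submodule.orthogonalProjectionOnto L v‖ := rfl
      _ ≤ ‖Submodule.orthogonalProjectionOnto L‖ * ‖v‖ := le_opNorm _ _
      _ ≤ 1 * ‖v‖ := by gcongr; exact Submodule.orthogonalProjection_norm_le L
      _ = ‖v‖ := one_mul _
  -- the map L → K given by projection is injective, hence surjective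
  have f_inj : Function.Injective ((Submodule.orthogonalProjectionOnto K).comp L.subtypeL) := by
    intro u v huv
    have h' : ∀ w : L, (Submodule.orthogonalProjectionOnto K).comp L.subtypeL w = 0 → w = 0 := by
      intro w hw
      have h1 : ‖(w : H) - (Submodule.orthogonalProjectionOnto K (w : H) : H)‖ ≤ a * ‖(w : H)‖ :=
        hgap _ w.2
      have h2 : (Submodule.orthogonalProjectionOnto K (w : H) : H) = 0 := by
        have : Submodule.orthogonalProjectionOnto K (w : H) = 0 := hw
        rw [this]; rfl
      rw [h2, sub_zero] at h1
      have : (1 - a) * ‖(w : H)‖ ≤ 0 := by nlinarith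
      have hw0 : ‖(w : H)‖ = 0 := le_antisymm (by nlinarith) (norm_nonneg _)
      ext
      simpa using norm_eq_zero.mp hw0
    have := h' (u - v) (by rw [map_sub, huv, sub_self])
    rwa [sub_eq_zero] at this
  have f_surj : Function.Surjective
      (((Submodule.orthogonalProjectionOnto K).comp L.subtypeL : L →L[ℂ] K) : L →ₗ[ℂ] K) := by
    exact (LinearMap.injective_iff_surjective_of_finrank_eq_finrank hdim.symm).mp f_inj
  -- reverse gap
  have hrev : ∀ w ∈ K, ‖w - (Submodule.orthogonalProjectionOnto L w : H)‖ ≤ (a / (1 - a)) * ‖w‖ := by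
    intro w hw
    obtain ⟨u, hu⟩ := f_surj ⟨w, hw⟩
    have hu' : (Submodule.orthogonalProjectionOnto K (u : H) : H) = w := by
      have := congrArg (Subtype.val : K → H) hu
      simpa using this
    have h1 : ‖(u : H) - w‖ ≤ a * ‖(u : H)‖ := by
      rw [← hu']; exact hgap _ u.2
    have h2 : ‖(u : H)‖ ≤ ‖w‖ + a * ‖(u : H)‖ := by
      calc ‖(u : H)‖ = ‖w + ((u : H) - w)‖ := by rw [show w + ((u : H) - w) = (u : H) by abel]
        _ ≤ ‖w‖ + ‖(u : H) - w‖ := norm_add_le _ _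
        _ ≤ ‖w‖ + a * ‖(u : H)‖ := by linarith
    have h3 : ‖(u : H)‖ ≤ ‖w‖ / (1 - a) := by
      rw [le_div_iff₀ (by linarith)]; nlinarith
    calc ‖w - (Submodule.orthogonalProjectionOnto L w : H)‖ ≤ ‖w - (u : H)‖ :=
          dist_orthProj_le' L w (u : H) u.2
      _ = ‖(u : H) - w‖ := norm_sub_rev _ _
      _ ≤ a * ‖(u : H)‖ := h1
      _ ≤ a * (‖w‖ / (1 - a)) := by gcongr
      _ = (a / (1 - a)) * ‖w‖ := by ring
  -- self-adjointness
  have hPsa : IsSelfAdjoint P := isSelfAdjoint_starProjection K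
  have hQsa : IsSelfAdjoint Q := isSelfAdjoint_starProjection L
  -- bound ‖(1 - P) ∘ Q‖ ≤ a
  have hb1 : ‖(1 - P).comp Q‖ ≤ a := by
    apply opNorm_le_bound _ ha0
    intro v
    have : ((1 - P).comp Q) v = Q v - (Submodule.orthogonalProjectionOnto K (Q v) : H) := by
      simp [ContinuousLinearMap.sub_apply, hPv]
    rw [this]
    calc ‖Q v - (Submodule.orthogonalProjectionOnto K (Q v) : H)‖ ≤ a * ‖Q v‖ := by
          apply hgap
          rw [hQv]; exact (Submodule.orthogonalProjectionOnto L v).2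
      _ ≤ a * ‖v‖ := by gcongr; exact hQnorm v
  -- bound ‖(1 - Q) ∘ P‖ ≤ a/(1-a)
  have hb2 : ‖(1 - Q).comp P‖ ≤ a / (1 - a) := by
    apply opNorm_le_bound _ (div_nonneg ha0 (by linarith))
    intro v
    have : ((1 - Q).comp P) v = P v - (Submodule.orthogonalProjectionOnto L (P v) : H) := by
      simp [ContinuousLinearMap.sub_apply, hQv]
    rw [this]
    calc ‖P v - (Submodule.orthogonalProjectionOnto L (P v) : H)‖ ≤ (a / (1 - a)) * ‖P v‖ := by
          apply hrev
          rw [hPv]; exact (Submodule.orthogonalProjectionOnto K v).2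
      _ ≤ (a / (1 - a)) * ‖v‖ := mul_le_mul_of_nonneg_left (hPnorm v) (div_nonneg ha0 (by linarith))
  -- ‖P ∘ (1 - Q)‖ = ‖(1 - Q) ∘ P‖ via adjoints
  have h1Qsa : IsSelfAdjoint (1 - Q) := (IsSelfAdjoint.one (R := H →L[ℂ] H)).sub hQsa
  have hb3 : ‖P.comp (1 - Q)‖ = ‖(1 - Q).comp P‖ := by
    have : ContinuousLinearMap.adjoint ((1 - Q).comp P) = P.comp (1 - Q) := by
      rw [adjoint_comp, hPsa.adjoint_eq, h1Qsa.adjoint_eq]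
    rw [← this]
    exact (LinearIsometryEquiv.norm_map ContinuousLinearMap.adjoint _)
  -- the algebraic identity
  have hid : (1 - P).comp Q - P.comp (1 - Q) = Q - P := by
    ext v
    simp only [ContinuousLinearMap.sub_apply, ContinuousLinearMap.comp_apply,
      ContinuousLinearMap.one_apply, map_sub]
    abel
  calc ‖P - Q‖ = ‖Q - P‖ := norm_sub_rev _ _
    _ = ‖(1 - P).comp Q - P.comp (1 - Q)‖ := by rw [hid]
    _ ≤ ‖(1 - P).comp Q‖ + ‖P.comp (1 - Q)‖ := norm_sub_le _ _
    _ ≤ a + a / (1 - a) := by rw [hb3]; exact add_le_add hb1 hb2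

/-- A bounded operator on a Hilbert space is Fredholm if its kernel is finite-dimensional
and its range is closed and of finite codimension. -/
def IsFredholm {H : Type*} [NormedAddCommGroup H] [InnerProductSpace ℂ H]
    (T : H →L[ℂ] H) : Prop :=
  FiniteDimensional ℂ (LinearMap.ker (T : H →ₗ[ℂ] H)) ∧ IsClosed (LinearMap.range (T : H →ₗ[ℂ] H) : Set H) ∧
    FiniteDimensional ℂ (H ⧸ LinearMap.range (T : H →ₗ[ℂ] H))

open Classical in
/-- The orthogonal projection of `H` onto the kernel of `T`, as a bounded operator
`H →L[ℂ] H` (defined to be `0` if the kernel is not finite-dimensional). -/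
noncomputable def kerProjection {H : Type*} [NormedAddCommGroup H] [InnerProductSpace ℂ H]
    (T : H →L[ℂ] H) : H →L[ℂ] H :=
  if h : FiniteDimensional ℂ (LinearMap.ker (T : H →ₗ[ℂ] H)) then
    haveI := h
    (LinearMap.ker (T : H →ₗ[ℂ] H)).subtypeL.comp (LinearMap.ker (T : H →ₗ[ℂ] H)).orthogonalProjectionOnto
  else 0

set_option maxHeartbeats 1000000 in
/-- For a norm-continuous family of self-adjoint Fredholm operators with
locally constant kernel dimension, the family of orthogonal projections onto the kernels is
norm-continuous. -/
theorem stmt1 {H : Type*} [NormedAddCommGroup H] [InnerProductSpace ℂ H] [CompleteSpace H]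
    {B : Type*} [TopologicalSpace B]
    (A : B → H →L[ℂ] H) (hA : Continuous A)
    (hsa : ∀ x, IsSelfAdjoint (A x)) (hfred : ∀ x, IsFredholm (A x))
    (hker : IsLocallyConstant fun x => Module.finrank ℂ (LinearMap.ker (A x : H →ₗ[ℂ] H))) :
    Continuous fun x => kerProjection (A x) := by
  rw [continuous_iff_continuousAt]
  intro x₀
  haveI hfd₀ : FiniteDimensional ℂ (LinearMap.ker (A x₀ : H →ₗ[ℂ] H)) := (hfred x₀).1
  haveI : CompleteSpace (LinearMap.ker (A x₀ : H →ₗ[ℂ] H)) := FiniteDimensional.complete ℂ _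
  set K₀ := LinearMap.ker (A x₀ : H →ₗ[ℂ] H) with hK₀
  haveI : CompleteSpace (LinearMap.range (A x₀ : H →ₗ[ℂ] H)) := (hfred x₀).2.1.completeSpace_coe
  -- the restriction of `A x₀` to `K₀ᗮ`, corestricted to its (closed) range
  set f : K₀ᗮ →L[ℂ] LinearMap.range (A x₀ : H →ₗ[ℂ] H) :=
    ((A x₀).comp K₀ᗮ.subtypeL).codRestrict (LinearMap.range (A x₀ : H →ₗ[ℂ] H))
      (fun u => LinearMap.mem_range.mpr ⟨_, rfl⟩) with hf
  have hinj : LinearMap.ker (f : K₀ᗮ →ₗ[ℂ] LinearMap.range (A x₀ : H →ₗ[ℂ] H)) = ⊥ := by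
    rw [Submodule.eq_bot_iff]
    intro u hu
    have h1 : A x₀ (u : H) = 0 := by
      have := congrArg (Subtype.val : LinearMap.range (A x₀ : H →ₗ[ℂ] H) → H) (LinearMap.mem_ker.mp hu)
      simpa [hf] using this
    have h2 : (u : H) ∈ K₀ ⊓ K₀ᗮ := ⟨h1, u.2⟩
    rw [K₀.inf_orthogonal_eq_bot] at h2
    exact Subtype.ext (by simpa using h2)
  have hsurj : LinearMap.range (f : K₀ᗮ →ₗ[ℂ] LinearMap.range (A x₀ : H →ₗ[ℂ] H)) = ⊤ := by
    rw [Submodule.eq_top_iff']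
    rintro ⟨y, hy⟩
    obtain ⟨v, hv⟩ := LinearMap.mem_range.mp hy
    refine LinearMap.mem_range.mpr ⟨⟨v - (Submodule.orthogonalProjectionOnto K₀ v : H),
      Submodule.sub_starProjection_mem_orthogonal (K := K₀) v⟩, ?_⟩
    apply Subtype.ext
    have hk : A x₀ (K₀.starProjection v) = 0 := (Submodule.orthogonalProjectionOnto K₀ v).2
    simpa [hf, map_sub, hk] using hv
  obtain ⟨C, hC, hbb⟩ : ∃ C : ℝ, 0 < C ∧ ∀ u ∈ K₀ᗮ, ‖u‖ ≤ C * ‖A x₀ u‖ := by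
    let e := ContinuousLinearEquiv.ofBijective f hinj hsurj
    refine ⟨‖(e.symm : LinearMap.range (A x₀ : H →ₗ[ℂ] H) →L[ℂ] K₀ᗮ)‖ + 1, by positivity, ?_⟩
    intro u hu
    have h1 : e.symm (e ⟨u, hu⟩) = ⟨u, hu⟩ := e.symm_apply_apply _
    have h2 := (e.symm : LinearMap.range (A x₀ : H →ₗ[ℂ] H) →L[ℂ] K₀ᗮ).le_opNorm (e ⟨u, hu⟩)
    rw [ContinuousLinearEquiv.coe_coe, h1] at h2
    have h3 : ‖e ⟨u, hu⟩‖ = ‖A x₀ u‖ := rfl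
    have h4 : ‖(⟨u, hu⟩ : K₀ᗮ)‖ = ‖u‖ := rfl
    rw [h3, h4] at h2
    nlinarith [norm_nonneg (A x₀ u)]
  rw [ContinuousAt, Metric.tendsto_nhds]
  intro ε hε
  set a : ℝ := min (1/2) (ε/4) with ha_def
  have ha0 : 0 < a := lt_min (by norm_num) (by linarith)
  have ha1 : a < 1 := lt_of_le_of_lt (min_le_left _ _) (by norm_num)
  have haε : a ≤ ε / 4 := min_le_right _ _
  have hahalf : a ≤ 1 / 2 := min_le_left _ _
  have h1 : ∀ᶠ x in 𝓝 x₀, dist (A x) (A x₀) < a / C :=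
    Metric.tendsto_nhds.mp (hA.continuousAt (x := x₀)) _ (div_pos ha0 hC)
  have h2 : ∀ᶠ x in 𝓝 x₀, Module.finrank ℂ (LinearMap.ker (A x : H →ₗ[ℂ] H)) = Module.finrank ℂ K₀ :=
    hker.eventually_eq x₀
  filter_upwards [h1, h2] with x hx1 hx2
  haveI hfdx : FiniteDimensional ℂ (LinearMap.ker (A x : H →ₗ[ℂ] H)) := (hfred x).1
  -- gap estimate: the kernel of `A x` is close to `K₀`
  have hgap : ∀ u ∈ LinearMap.ker (A x : H →ₗ[ℂ] H), ‖u - (Submodule.orthogonalProjectionOnto K₀ u : H)‖ ≤ a * ‖u‖ := by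
    intro u hu
    have hmem : u - (Submodule.orthogonalProjectionOnto K₀ u : H) ∈ K₀ᗮ :=
      Submodule.sub_starProjection_mem_orthogonal (K := K₀) u
    have hAv : A x₀ (u - (Submodule.orthogonalProjectionOnto K₀ u : H)) = A x₀ u := by
      rw [map_sub]
      have hz : A x₀ ((Submodule.orthogonalProjectionOnto K₀ u : H)) = 0 := (Submodule.orthogonalProjectionOnto K₀ u).2
      rw [hz, sub_zero]
    have hb := hbb _ hmem
    rw [hAv] at hb
    have h0 : A x u = 0 := hu
    have hAu : ‖A x₀ u‖ ≤ (a / C) * ‖u‖ := by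
      calc ‖A x₀ u‖ = ‖(A x₀ - A x) u‖ := by
            simp [ContinuousLinearMap.sub_apply, h0]
        _ ≤ ‖A x₀ - A x‖ * ‖u‖ := le_opNorm _ _
        _ ≤ (a / C) * ‖u‖ := by
            have hd : ‖A x₀ - A x‖ = dist (A x) (A x₀) := by
              rw [dist_eq_norm, norm_sub_rev]
            exact mul_le_mul_of_nonneg_right (by rw [hd]; exact hx1.le) (norm_nonneg u)
    calc ‖u - (Submodule.orthogonalProjectionOnto K₀ u : H)‖ ≤ C * ‖A x₀ u‖ := hb
      _ ≤ C * ((a / C) * ‖u‖) := by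
          exact mul_le_mul_of_nonneg_left hAu hC.le
      _ = a * ‖u‖ := by
          rw [← mul_assoc, mul_comm C (a / C), div_mul_cancel₀ a hC.ne']
  have hdim : Module.finrank ℂ K₀ = Module.finrank ℂ (LinearMap.ker (A x : H →ₗ[ℂ] H)) := hx2.symm
  have hbound := proj_dist_bound K₀ (LinearMap.ker (A x : H →ₗ[ℂ] H)) hdim ha0.le ha1 hgap
  have e1 : kerProjection (A x)
      = (LinearMap.ker (A x : H →ₗ[ℂ] H)).subtypeL.comp (Submodule.orthogonalProjectionOnto (LinearMap.ker (A x : H →ₗ[ℂ] H))) :=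
    dif_pos hfdx
  have e2 : kerProjection (A x₀) = K₀.subtypeL.comp (Submodule.orthogonalProjectionOnto K₀) := dif_pos hfd₀
  rw [dist_eq_norm, e1, e2, norm_sub_rev]
  have hfrac : a / (1 - a) ≤ 2 * a := by
    rw [div_le_iff₀ (by linarith)]
    nlinarith
  calc ‖K₀.subtypeL.comp (Submodule.orthogonalProjectionOnto K₀)
        - (LinearMap.ker (A x : H →ₗ[ℂ] H)).subtypeL.comp (Submodule.orthogonalProjectionOnto (LinearMap.ker (A x : H →ₗ[ℂ] H)))‖
      ≤ a + a / (1 - a) := hbound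
    _ ≤ a + 2 * a := by linarith
    _ < ε := by linarith
end

section
/- Let A be an invertible bounded self-adjoint operator on a complex Hilbert space H that is neither essentially positive nor essentially negative, and let h(A) denote the operator obtained by applying the continuous functional calculus of A to the sign function (which is continuous on the spectrum of A since 0 does not belong to the spectrum). Then both eigenspaces ker(h(A) − 1) and ker(h(A) + 1) are infinite-dimensional. -/
open scoped ComplexOrder

/-- A bounded self-adjoint operator is essentially positive if there is a closed invariant
subspace of finite codimension on which it is positive definite. -/
def EssentiallyPositive {H : Type*} [NormedAddCommGroup H] [InnerProductSpace ℂ H]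
    (A : H →L[ℂ] H) : Prop :=
  ∃ U : Submodule ℂ H, IsClosed (U : Set H) ∧ FiniteDimensional ℂ (H ⧸ U) ∧
    (∀ u ∈ U, A u ∈ U) ∧ ∀ u ∈ U, u ≠ 0 → 0 < (inner ℂ (A u) u : ℂ)

lemma sign_continuousOn {s : Set ℝ} (hs : (0:ℝ) ∉ s) : ContinuousOn Real.sign s := by
  intro x hx
  have hx0 : x ≠ 0 := fun h => hs (h ▸ hx)
  apply ContinuousAt.continuousWithinAt
  rcases hx0.lt_or_gt with hlt | hlt
  · have he : Real.sign =ᶠ[nhds x] fun _ => (-1 : ℝ) := by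
      filter_upwards [Iio_mem_nhds hlt] with y hy using Real.sign_of_neg hy
    exact (continuousAt_congr he).mpr continuousAt_const
  · have he : Real.sign =ᶠ[nhds x] fun _ => (1 : ℝ) := by
      filter_upwards [Ioi_mem_nhds hlt] with y hy using Real.sign_of_pos hy
    exact (continuousAt_congr he).mpr continuousAt_const

/-- If `A` is an invertible bounded self-adjoint operator on a complex
Hilbert space which is neither essentially positive nor essentially negative, then both
eigenspaces `ker (h(A) - 1)` and `ker (h(A) + 1)` of `h(A) = cfc Real.sign A` are
infinite-dimensional. -/
theorem stmt4 {H : Type*} [NormedAddCommGroup H] [InnerProductSpace ℂ H] [CompleteSpace H]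
    (A : H →L[ℂ] H) (hsa : IsSelfAdjoint A) (hinv : IsUnit A)
    (hp : ¬EssentiallyPositive A) (hn : ¬EssentiallyPositive (-A)) :
    ¬FiniteDimensional ℂ (LinearMap.ker ((cfc Real.sign A - 1 : H →L[ℂ] H) : H →ₗ[ℂ] H)) ∧
    ¬FiniteDimensional ℂ (LinearMap.ker ((cfc Real.sign A + 1 : H →L[ℂ] H) : H →ₗ[ℂ] H)) := by
  set h : H →L[ℂ] H := cfc Real.sign A with hh_def
  have hspec0 : (0:ℝ) ∉ spectrum ℝ A := spectrum.zero_notMem ℝ hinv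
  have hcont : ContinuousOn Real.sign (spectrum ℝ A) := sign_continuousOn hspec0
  have hcont_id : ContinuousOn (id : ℝ → ℝ) (spectrum ℝ A) := continuousOn_id
  have hh_sa : IsSelfAdjoint h := cfc_predicate Real.sign A
  -- h is a square root of the identity
  have hhh : h * h = 1 := by
    rw [hh_def, ← cfc_mul Real.sign Real.sign A hcont hcont, ← cfc_one (R := ℝ) A hsa]
    refine cfc_congr fun x hx => ?_
    have hx0 : x ≠ 0 := fun h0 => hspec0 (h0 ▸ hx)
    rcases Real.sign_apply_eq_of_ne_zero x hx0 with h1 | h1 <;> simp [h1]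
  set T : H →L[ℂ] H := cfc (fun x => id x * Real.sign x) A with hT_def
  have hAh : A * h = T := by
    have := cfc_mul (id : ℝ → ℝ) Real.sign A hcont_id hcont
    rw [cfc_id ℝ A hsa] at this
    exact this.symm
  have hhA : h * A = T := by
    have := cfc_mul Real.sign (id : ℝ → ℝ) A hcont hcont_id
    rw [cfc_id ℝ A hsa] at this
    rw [← this]
    exact cfc_congr fun x _ => mul_comm _ _
  have hT_nonneg : (0 : H →L[ℂ] H) ≤ T := by
    refine cfc_nonneg fun x _ => ?_
    rcases lt_trichotomy x 0 with hx' | hx' | hx'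
    · simp only [id_eq, Real.sign_of_neg hx']; nlinarith
    · simp [hx']
    · simp only [id_eq, Real.sign_of_pos hx']; nlinarith
  have hh_unit : IsUnit h := ⟨⟨h, h, hhh, hhh⟩, rfl⟩
  have hT_unit : IsUnit T := hAh ▸ hinv.mul hh_unit
  -- positive definiteness of T via its square root
  set S : H →L[ℂ] H := CFC.sqrt T with hS_def
  have hS2 : S * S = T := CFC.sqrt_mul_sqrt_self T hT_nonneg
  have hS_nonneg : (0 : H →L[ℂ] H) ≤ S := CFC.sqrt_nonneg T
  have hS_sa : IsSelfAdjoint S := IsSelfAdjoint.of_nonneg hS_nonneg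
  have hS_unit : IsUnit S := by
    obtain ⟨u, hu⟩ := hT_unit
    have hST : S * T = T * S := by rw [← hS2, mul_assoc]
    have hc : Commute S (↑u : H →L[ℂ] H) := by rw [hu]; exact hST
    have hc' : Commute S (↑u⁻¹ : H →L[ℂ] H) := hc.units_inv_right
    refine ⟨⟨S, ↑u⁻¹ * S, ?_, ?_⟩, rfl⟩
    · rw [← hc'.eq, ← mul_assoc, hS2, ← hu, Units.mul_inv]
    · rw [mul_assoc, hS2, ← hu, Units.inv_mul]
  have hS_inj : ∀ x : H, S x = 0 → x = 0 := by
    intro x hx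
    obtain ⟨v, hv⟩ := hS_unit
    have h1 : (↑v⁻¹ * ↑v : H →L[ℂ] H) x = x := by rw [Units.inv_mul]; rfl
    rw [ContinuousLinearMap.mul_apply, hv, hx, map_zero] at h1
    exact h1.symm
  have hSsymm := ContinuousLinearMap.isSelfAdjoint_iff_isSymmetric.mp hS_sa
  have hTpos : ∀ u : H, u ≠ 0 → 0 < (inner ℂ (T u) u : ℂ) := by
    intro u hu
    have h1 : T u = S (S u) := by rw [← hS2]; rfl
    have h2 : (inner ℂ (T u) u : ℂ) = inner ℂ (S u) (S u) := by rw [h1]; exact hSsymm (S u) u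
    have hSu : S u ≠ 0 := fun h0 => hu (hS_inj u h0)
    rw [h2, inner_self_eq_norm_sq_to_K]
    have : (0:ℝ) < ‖S u‖ ^ 2 := pow_pos (norm_pos_iff.mpr hSu) 2
    calc (0 : ℂ) = ((0:ℝ) : ℂ) := by norm_num
      _ < ((‖S u‖ ^ 2 : ℝ) : ℂ) := by exact_mod_cast Complex.real_lt_real.mpr this
      _ = (‖S u‖ : ℂ) ^ 2 := by push_cast; ring
  have hh_apply : ∀ x : H, h (h x) = x := by
    intro x
    have := DFunLike.congr_fun hhh x
    simpa [ContinuousLinearMap.mul_apply] using this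
  have memp : ∀ u : H, u ∈ LinearMap.ker ((h - 1 : H →L[ℂ] H) : H →ₗ[ℂ] H) ↔ h u = u := by
    intro u
    simp [LinearMap.mem_ker, ContinuousLinearMap.sub_apply, sub_eq_zero]
  have memm : ∀ u : H, u ∈ LinearMap.ker ((h + 1 : H →L[ℂ] H) : H →ₗ[ℂ] H) ↔ h u = -u := by
    intro u
    simp [LinearMap.mem_ker, ContinuousLinearMap.add_apply, add_eq_zero_iff_eq_neg]
  -- the two kernels are complementary
  have hcompl : IsCompl (LinearMap.ker ((h - 1 : H →L[ℂ] H) : H →ₗ[ℂ] H) : Submodule ℂ H) (LinearMap.ker ((h + 1 : H →L[ℂ] H) : H →ₗ[ℂ] H)) := by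
    constructor
    · rw [Submodule.disjoint_def]
      intro x hx1 hx2
      rw [memp] at hx1
      rw [memm] at hx2
      have h2 : (2:ℂ) • x = 0 := by
        rw [two_smul]
        nth_rewrite 1 [← hx1]
        rw [hx2]
        simp
      rcases smul_eq_zero.mp h2 with h0 | h0
      · exact absurd h0 two_ne_zero
      · exact h0
    · rw [codisjoint_iff_le_sup]
      intro x _
      rw [Submodule.mem_sup]
      refine ⟨(2⁻¹ : ℂ) • (x + h x), ?_, (2⁻¹ : ℂ) • (x - h x), ?_, ?_⟩
      · rw [memp, map_smul, map_add, hh_apply]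
        rw [add_comm (h x) x]
      · rw [memm, map_smul, map_sub, hh_apply, ← smul_neg, neg_sub]
      · rw [← smul_add]
        have : x + h x + (x - h x) = (2:ℂ) • x := by rw [two_smul]; abel
        rw [this, smul_smul]
        norm_num
  -- action of A on the kernels
  have hAp : ∀ u ∈ LinearMap.ker ((h - 1 : H →L[ℂ] H) : H →ₗ[ℂ] H), A u = T u := by
    intro u hu
    rw [memp] at hu
    calc A u = A (h u) := by rw [hu]
      _ = (A * h) u := rfl
      _ = T u := by rw [hAh]
  have hAm : ∀ u ∈ LinearMap.ker ((h + 1 : H →L[ℂ] H) : H →ₗ[ℂ] H), A u = -(T u) := by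
    intro u hu
    rw [memm] at hu
    have : T u = -(A u) := by
      calc T u = (A * h) u := by rw [hAh]
        _ = A (h u) := rfl
        _ = -(A u) := by rw [hu, map_neg]
    rw [this, neg_neg]
  have hhAapp : ∀ u : H, h (A u) = T u := by
    intro u
    calc h (A u) = (h * A) u := rfl
      _ = T u := by rw [hhA]
  constructor
  · -- ker (h - 1) infinite-dimensional
    intro hfd
    apply hn
    refine ⟨LinearMap.ker ((h + 1 : H →L[ℂ] H) : H →ₗ[ℂ] H), ?_, ?_, ?_, ?_⟩
    · exact ContinuousLinearMap.isClosed_ker (h + 1)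
    · exact (Submodule.quotientEquivOfIsCompl _ _ hcompl.symm).symm.finiteDimensional
    · intro u hu
      rw [memm]
      have h1 : A u = -(T u) := hAm u hu
      have h2 : (-A) u = T u := by rw [ContinuousLinearMap.neg_apply, h1, neg_neg]
      rw [h2, show T u = -(A u) by rw [h1, neg_neg], map_neg, hhAapp u, h1, neg_neg]
    · intro u hu hu0
      have h1 : A u = -(T u) := hAm u hu
      rw [ContinuousLinearMap.neg_apply, h1, neg_neg]
      exact hTpos u hu0
  · -- ker (h + 1) infinite-dimensional
    intro hfd
    apply hp
    refine ⟨LinearMap.ker ((h - 1 : H →L[ℂ] H) : H →ₗ[ℂ] H), ?_, ?_, ?_, ?_⟩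
    · exact ContinuousLinearMap.isClosed_ker (h - 1)
    · exact (Submodule.quotientEquivOfIsCompl _ _ hcompl).symm.finiteDimensional
    · intro u hu
      rw [memp, hhAapp u, hAp u hu]
    · intro u hu hu0
      rw [hAp u hu]
      exact hTpos u hu0
end

section
/- Let H be a separable infinite-dimensional complex Hilbert space and let F₀ ∈ P(H). Then there exist an open neighborhood N of F₀ in P(H) and a continuous map u : N → U(H) into the unitary group of H (with the operator-norm topology) such that u(F₀) = 1 and u(F) · F₀ · u(F)⁻¹ = F for every F ∈ N; that is, the conjugation map U(H) → P(H), v ↦ v F₀ v⁻¹, admits a continuous local section near F₀. -/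
/-- Membership in the space `P(H)`: bounded self-adjoint involutions whose `+1`- and
`-1`-eigenspaces are both infinite-dimensional. -/
def MemP {H : Type*} [NormedAddCommGroup H] [InnerProductSpace ℂ H] [CompleteSpace H]
    (F : H →L[ℂ] H) : Prop :=
  IsSelfAdjoint F ∧ F * F = 1 ∧
    ¬FiniteDimensional ℂ (LinearMap.ker ((F - 1 : H →L[ℂ] H) : H →ₗ[ℂ] H)) ∧
    ¬FiniteDimensional ℂ (LinearMap.ker ((F + 1 : H →L[ℂ] H) : H →ₗ[ℂ] H))

open Polynomial in
/-- Weierstrass approximation on an interval, in the convenient form. -/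
lemma aux_poly_approx (a b : ℝ) (f : ℝ → ℝ) (hf : Continuous f) {ε : ℝ} (hε : 0 < ε) :
    ∃ p : ℝ[X], ∀ x ∈ Set.Icc a b, |f x - p.eval x| ≤ ε := by
  set g : C(Set.Icc a b, ℝ) := ⟨fun x => f x, by fun_prop⟩ with hg_def
  have hg : g ∈ closure ((polynomialFunctions (Set.Icc a b) : Subalgebra ℝ C(Set.Icc a b, ℝ)) : Set C(Set.Icc a b, ℝ)) := by
    have := polynomialFunctions_closure_eq_top a b
    rw [← Subalgebra.topologicalClosure_coe, this]
    simp
  obtain ⟨q, hq_mem, hq⟩ := Metric.mem_closure_iff.mp hg ε hε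
  rw [polynomialFunctions_coe] at hq_mem
  obtain ⟨p, rfl⟩ := hq_mem
  refine ⟨p, fun x hx => ?_⟩
  have := ContinuousMap.dist_apply_le_dist (f := g) (g := Polynomial.toContinuousMapOnAlgHom _ p) ⟨x, hx⟩
  have h2 := this.trans hq.le
  simpa [hg_def, Real.dist_eq] using h2

section Aux

variable {H : Type*} [NormedAddCommGroup H] [InnerProductSpace ℂ H] [CompleteSpace H]
  [Nontrivial H]

local notation "𝔸" => H →L[ℂ] H

open Polynomial in
lemma aux_cfc_approx (a b : ℝ) (f : ℝ → ℝ) (hf : Continuous f) (T : 𝔸)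
    (hT : IsSelfAdjoint T) (hspec : spectrum ℝ T ⊆ Set.Icc a b) {ε : ℝ} (hε : 0 < ε) :
    ∃ p : ℝ[X], ‖cfc f T - aeval T p‖ ≤ ε := by
  obtain ⟨p, hp⟩ := aux_poly_approx a b f hf hε
  refine ⟨p, ?_⟩
  rw [← cfc_polynomial p T, ← cfc_sub f (fun x => p.eval x) T]
  exact norm_cfc_le hε.le fun x hx => by simpa [Real.norm_eq_abs] using hp x (hspec hx)

open Polynomial in
lemma aux_commute_aeval (T X : 𝔸) (h : Commute X T) (p : ℝ[X]) :
    Commute X (aeval T p) := by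
  rw [aeval_eq_sum_range]
  exact Commute.sum_right _ _ _ fun i _ => (h.pow_right i).smul_right _

open Polynomial in
lemma aux_commute_cfc (a b : ℝ) (f : ℝ → ℝ) (hf : Continuous f) (T X : 𝔸)
    (hT : IsSelfAdjoint T) (hspec : spectrum ℝ T ⊆ Set.Icc a b) (h : Commute X T) :
    Commute X (cfc f T) := by
  rw [Commute, SemiconjBy, ← sub_eq_zero, ← norm_le_zero_iff]
  refine le_of_forall_pos_le_add (fun ε hε => ?_)
  have hε4 : 0 < ε / (2 * ‖X‖ + 1) := by positivity
  obtain ⟨p, hp⟩ := aux_cfc_approx a b f hf T hT hspec hε4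
  have hcomm := aux_commute_aeval T X h p
  have key : X * cfc f T - cfc f T * X
      = X * (cfc f T - aeval T p) + (X * aeval T p - aeval T p * X)
        + (aeval T p - cfc f T) * X := by noncomm_ring
  rw [hcomm.eq, sub_self] at key
  calc ‖X * cfc f T - cfc f T * X‖
      ≤ ‖X * (cfc f T - aeval T p)‖ + ‖(aeval T p - cfc f T) * X‖ := by
        rw [key, add_zero]; exact norm_add_le _ _
    _ ≤ ‖X‖ * (ε / (2 * ‖X‖ + 1)) + (ε / (2 * ‖X‖ + 1)) * ‖X‖ := by
        gcongr
        · exact (norm_mul_le _ _).trans (by gcongr)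
        · refine (norm_mul_le _ _).trans ?_
          gcongr
          rwa [norm_sub_rev]
    _ ≤ ε := by
        have h1 : (0:ℝ) < 2 * ‖X‖ + 1 := by positivity
        have hc : ε / (2 * ‖X‖ + 1) * (2 * ‖X‖ + 1) = ε := div_mul_cancel₀ _ h1.ne'
        nlinarith [norm_nonneg X, hε4.le]
    _ ≤ 0 + ε := by linarith

lemma aux_spec (T : 𝔸) (hT : IsSelfAdjoint T) (h : ‖T - 4‖ ≤ 2) :
    spectrum ℝ T ⊆ Set.Icc (2:ℝ) 6 := by
  intro x hx
  have h4 : algebraMap ℝ 𝔸 4 = 4 := map_ofNat _ 4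
  have hx' : x - 4 ∈ spectrum ℝ (T - algebraMap ℝ 𝔸 4) := by
    rw [← spectrum.sub_singleton_eq]
    exact Set.sub_mem_sub hx rfl
  have hb := spectrum.norm_le_norm_of_mem hx'
  rw [h4] at hb
  have habs : |x - 4| ≤ 2 := by
    rw [← Real.norm_eq_abs]; exact hb.trans h
  obtain ⟨h1, h2⟩ := abs_le.mp habs
  exact ⟨by linarith, by linarith⟩

/-- The set on which we need continuity of the square root. -/
lemma aux_contOn_sqrt :
    ContinuousOn (fun T : 𝔸 => cfc Real.sqrt T)
      {T : 𝔸 | IsSelfAdjoint T ∧ ‖T - 4‖ ≤ 2} := by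
  rw [Metric.continuousOn_iff]
  rintro T₀ ⟨hT₀, hT₀n⟩ ε hε
  have hε3 : 0 < ε / 4 := by linarith
  obtain ⟨p, hp⟩ := aux_poly_approx 2 6 Real.sqrt Real.continuous_sqrt hε3
  have haeval : ContinuousAt (fun T : 𝔸 => Polynomial.aeval T p) T₀ :=
    (p.continuous_aeval).continuousAt
  obtain ⟨δ, hδ, hd⟩ := Metric.continuousAt_iff.mp haeval (ε / 4) hε3
  refine ⟨δ, hδ, ?_⟩
  rintro T ⟨hT, hTn⟩ hdist
  have happrox : ∀ (S : 𝔸), IsSelfAdjoint S → ‖S - 4‖ ≤ 2 →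
      ‖cfc Real.sqrt S - Polynomial.aeval S p‖ ≤ ε / 4 := by
    intro S hS hSn
    rw [← cfc_polynomial p S, ← cfc_sub Real.sqrt (fun x => p.eval x) S]
    exact norm_cfc_le hε3.le fun x hx => by
      simpa [Real.norm_eq_abs] using hp x (aux_spec S hS hSn hx)
  have h1 := happrox T hT hTn
  have h2 := happrox T₀ hT₀ hT₀n
  have h3 := (hd hdist).le
  rw [dist_eq_norm] at h3 ⊢
  calc ‖cfc Real.sqrt T - cfc Real.sqrt T₀‖
      ≤ ‖cfc Real.sqrt T - Polynomial.aeval T p‖ + ‖Polynomial.aeval T p - Polynomial.aeval T₀ p‖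
        + ‖Polynomial.aeval T₀ p - cfc Real.sqrt T₀‖ := by
        have := norm_add₃_le (a := cfc Real.sqrt T - Polynomial.aeval T p)
          (b := Polynomial.aeval T p - Polynomial.aeval T₀ p)
          (c := Polynomial.aeval T₀ p - cfc Real.sqrt T₀)
        simpa using this
    _ ≤ ε / 4 + ε / 4 + ε / 4 := by
        gcongr
        rwa [norm_sub_rev]
    _ < ε := by linarith

lemma aux_commute_ringInverse {X S : 𝔸} (h : Commute X S) (hS : IsUnit S) :
    Commute X (Ring.inverse S) := by
  obtain ⟨s, rfl⟩ := hS
  rw [Ring.inverse_unit]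
  exact h.units_inv_right

end Aux

section Main

variable {H : Type*} [NormedAddCommGroup H] [InnerProductSpace ℂ H] [CompleteSpace H]
  [Nontrivial H]

local notation "𝔸" => H →L[ℂ] H

/-- The local section: `u(F) = (F+F₀) · (√((F+F₀)²))⁻¹ · F₀`. -/
noncomputable def uAux (F₀ F : 𝔸) : 𝔸 :=
  (F + F₀) * Ring.inverse (cfc Real.sqrt ((F + F₀) * (F + F₀))) * F₀

lemma aux_pre (F₀ F : 𝔸) (hsa₀ : IsSelfAdjoint F₀) (hsq₀ : F₀ * F₀ = 1)
    (hsa : IsSelfAdjoint F) (hsq : F * F = 1) (hclose : ‖F - F₀‖ < 1) :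
    IsSelfAdjoint ((F + F₀) * (F + F₀)) ∧ ‖(F + F₀) * (F + F₀) - 4‖ ≤ 2 ∧
      IsUnit (cfc Real.sqrt ((F + F₀) * (F + F₀))) := by
  have hBsa : IsSelfAdjoint (F + F₀) := hsa.add hsa₀
  have hTsa : IsSelfAdjoint ((F + F₀) * (F + F₀)) := by
    rw [IsSelfAdjoint, star_mul, hBsa.star_eq]
  have hnorm₀ : ‖F₀‖ ≤ 1 := by
    have h := CStarRing.norm_star_mul_self (x := F₀)
    rw [hsa₀.star_eq, hsq₀, norm_one] at h
    nlinarith [norm_nonneg F₀]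
  have hT4 : ‖(F + F₀) * (F + F₀) - 4‖ ≤ 2 := by
    have e1 : (F + F₀) * (F + F₀) - 4 = (F - F₀) * F₀ + F₀ * (F - F₀)
        + (F * F - 1) + (F₀ * F₀ - 1) + (F₀ * F₀ - 1) + (F₀ * F₀ - 1) := by
      rw [show (4:H →L[ℂ] H) = 1 + 1 + 1 + 1 by norm_num]; noncomm_ring
    rw [hsq, hsq₀] at e1
    simp only [sub_self, add_zero] at e1
    calc ‖(F + F₀) * (F + F₀) - 4‖ ≤ ‖(F - F₀) * F₀‖ + ‖F₀ * (F - F₀)‖ := by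
          rw [e1]; exact norm_add_le _ _
      _ ≤ ‖F - F₀‖ * ‖F₀‖ + ‖F₀‖ * ‖F - F₀‖ := by
          gcongr <;> exact norm_mul_le _ _
      _ ≤ 2 := by nlinarith [norm_nonneg (F - F₀), norm_nonneg F₀]
  have hspecT : spectrum ℝ ((F + F₀) * (F + F₀)) ⊆ Set.Icc (2:ℝ) 6 := aux_spec _ hTsa hT4
  exact ⟨hTsa, hT4, (isUnit_cfc_iff Real.sqrt ((F + F₀) * (F + F₀))
    Real.continuous_sqrt.continuousOn hTsa).mpr
      fun x hx => ne_of_gt (Real.sqrt_pos.mpr (by linarith [(hspecT hx).1]))⟩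

lemma uAux_spec (F₀ F : 𝔸) (hsa₀ : IsSelfAdjoint F₀) (hsq₀ : F₀ * F₀ = 1)
    (hsa : IsSelfAdjoint F) (hsq : F * F = 1) (hclose : ‖F - F₀‖ < 1) :
    star (uAux F₀ F) * uAux F₀ F = 1 ∧ uAux F₀ F * star (uAux F₀ F) = 1 ∧
      uAux F₀ F * F₀ * star (uAux F₀ F) = F := by
  set B : 𝔸 := F + F₀ with hB_def
  have hBsa : IsSelfAdjoint B := hsa.add hsa₀
  have hTsa : IsSelfAdjoint (B * B) := by
    rw [IsSelfAdjoint, star_mul, hBsa.star_eq]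
  have hnorm₀ : ‖F₀‖ ≤ 1 := by
    have h := CStarRing.norm_star_mul_self (x := F₀)
    rw [hsa₀.star_eq, hsq₀, norm_one] at h
    nlinarith [norm_nonneg F₀]
  have hT4 : ‖B * B - 4‖ ≤ 2 := by
    have e1 : B * B - 4 = (F - F₀) * F₀ + F₀ * (F - F₀)
        + (F * F - 1) + (F₀ * F₀ - 1) + (F₀ * F₀ - 1) + (F₀ * F₀ - 1) := by
      rw [hB_def, show (4:H →L[ℂ] H) = 1 + 1 + 1 + 1 by norm_num]; noncomm_ring
    rw [hsq, hsq₀] at e1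
    simp only [sub_self, add_zero] at e1
    calc ‖B * B - 4‖ ≤ ‖(F - F₀) * F₀‖ + ‖F₀ * (F - F₀)‖ := by
          rw [e1]; exact norm_add_le _ _
      _ ≤ ‖F - F₀‖ * ‖F₀‖ + ‖F₀‖ * ‖F - F₀‖ := by
          gcongr <;> exact norm_mul_le _ _
      _ ≤ 2 := by nlinarith [norm_nonneg (F - F₀), norm_nonneg F₀]
  have hspecT : spectrum ℝ (B * B) ⊆ Set.Icc (2:ℝ) 6 := aux_spec _ hTsa hT4
  set S : 𝔸 := cfc Real.sqrt (B * B) with hS_def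
  have hSsa : IsSelfAdjoint S := cfc_predicate _ _
  have hS2 : S * S = B * B := by
    rw [hS_def, ← cfc_mul Real.sqrt Real.sqrt (B * B)
      Real.continuous_sqrt.continuousOn Real.continuous_sqrt.continuousOn]
    have h1 : cfc (fun x => Real.sqrt x * Real.sqrt x) (B * B) = cfc (id : ℝ → ℝ) (B * B) :=
      cfc_congr fun x hx => Real.mul_self_sqrt (by linarith [(hspecT hx).1])
    rw [h1, cfc_id ℝ (B * B)]
  have hSunit : IsUnit S :=
    (isUnit_cfc_iff Real.sqrt (B * B) Real.continuous_sqrt.continuousOn hTsa).mpr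
      fun x hx => ne_of_gt (Real.sqrt_pos.mpr (by linarith [(hspecT hx).1]))
  set Si : 𝔸 := Ring.inverse S with hSi_def
  have hSiS : Si * S = 1 := Ring.inverse_mul_cancel _ hSunit
  have hSSi : S * Si = 1 := Ring.mul_inverse_cancel _ hSunit
  have hSisa : star Si = Si := by
    have hstep : star Si * S = 1 := by
      conv_lhs => rw [← hSsa.star_eq, ← star_mul, hSSi, star_one]
    calc star Si = star Si * (S * Si) := by rw [hSSi, mul_one]
      _ = (star Si * S) * Si := by rw [mul_assoc]
      _ = Si := by rw [hstep, one_mul]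
  have hcommFT : Commute F (B * B) := by
    have c1 : F * (B * B) - (B * B) * F
        = (F * F) * F₀ - F₀ * (F * F) + F * (F₀ * F₀) - (F₀ * F₀) * F := by
      rw [hB_def]; noncomm_ring
    rw [hsq, hsq₀, one_mul, mul_one, one_mul, mul_one] at c1
    rw [Commute, SemiconjBy, ← sub_eq_zero, c1]
    abel
  have hcommF₀T : Commute F₀ (B * B) := by
    have c2 : F₀ * (B * B) - (B * B) * F₀
        = F₀ * (F * F) + (F₀ * F₀) * F - (F * F) * F₀ - F * (F₀ * F₀) := by
      rw [hB_def]; noncomm_ring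
    rw [hsq, hsq₀, one_mul, mul_one, one_mul, mul_one] at c2
    rw [Commute, SemiconjBy, ← sub_eq_zero, c2]
    abel
  have hcommBT : Commute B (B * B) := (Commute.refl B).mul_right (Commute.refl B)
  have hcommFS : Commute F S :=
    aux_commute_cfc 2 6 Real.sqrt Real.continuous_sqrt (B * B) F hTsa hspecT hcommFT
  have hcommF₀S : Commute F₀ S :=
    aux_commute_cfc 2 6 Real.sqrt Real.continuous_sqrt (B * B) F₀ hTsa hspecT hcommF₀T
  have hcommBS : Commute B S :=
    aux_commute_cfc 2 6 Real.sqrt Real.continuous_sqrt (B * B) B hTsa hspecT hcommBT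
  have hcommFSi : Commute F Si := aux_commute_ringInverse hcommFS hSunit
  have hcommF₀Si : Commute F₀ Si := aux_commute_ringInverse hcommF₀S hSunit
  have hcommBSi : Commute B Si := aux_commute_ringInverse hcommBS hSunit
  have hkeyBF : F * B = B * F₀ := by
    have c3 : F * B - B * F₀ = F * F - F₀ * F₀ := by rw [hB_def]; noncomm_ring
    rw [hsq, hsq₀, sub_self] at c3
    rwa [← sub_eq_zero]
  have hu : uAux F₀ F = B * Si * F₀ := rfl
  have hustar : star (uAux F₀ F) = F₀ * Si * B := by
    rw [hu, star_mul, star_mul, hsa₀.star_eq, hSisa, hBsa.star_eq, mul_assoc]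
  have h1 : star (uAux F₀ F) * uAux F₀ F = 1 := by
    rw [hustar, hu]
    calc (F₀ * Si * B) * (B * Si * F₀) = F₀ * (Si * (B * B) * Si) * F₀ := by noncomm_ring
      _ = F₀ * (Si * (S * S) * Si) * F₀ := by rw [hS2]
      _ = F₀ * F₀ := by
          rw [show Si * (S * S) * Si = ((Si * S) * S) * Si by noncomm_ring, hSiS, one_mul, hSSi,
            mul_one]
      _ = 1 := hsq₀
  have h2 : uAux F₀ F * star (uAux F₀ F) = 1 := by
    rw [hustar, hu]
    calc (B * Si * F₀) * (F₀ * Si * B) = B * Si * (F₀ * F₀) * Si * B := by noncomm_ring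
      _ = B * Si * Si * B := by rw [hsq₀, mul_one]
      _ = Si * Si * (S * S) := by
          have hswap : B * Si = Si * B := hcommBSi.eq
          conv_lhs => rw [hswap]
          have e2 : Si * B * Si * B = Si * (B * Si) * B := by noncomm_ring
          conv_lhs => rw [e2, hswap]
          rw [hS2]
          noncomm_ring
      _ = 1 := by
          rw [show Si * Si * (S * S) = Si * ((Si * S) * S) by noncomm_ring, hSiS, one_mul, hSiS]
  have hkey : F * uAux F₀ F = uAux F₀ F * F₀ := by
    rw [hu]
    calc F * (B * Si * F₀) = (F * B) * Si * F₀ := by noncomm_ring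
      _ = (B * F₀) * Si * F₀ := by rw [hkeyBF]
      _ = B * (F₀ * Si) * F₀ := by noncomm_ring
      _ = B * (Si * F₀) * F₀ := by rw [hcommF₀Si.eq]
      _ = B * Si * F₀ * F₀ := by noncomm_ring
  refine ⟨h1, h2, ?_⟩
  rw [← hkey, mul_assoc, h2, mul_one]

lemma uAux_self (F₀ : 𝔸) (hsq₀ : F₀ * F₀ = 1) : uAux F₀ F₀ = 1 := by
  have hT : (F₀ + F₀) * (F₀ + F₀) = (4 : 𝔸) := by
    have e : (F₀ + F₀) * (F₀ + F₀) - 4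
        = (F₀ * F₀ - 1) + (F₀ * F₀ - 1) + (F₀ * F₀ - 1) + (F₀ * F₀ - 1) := by
      rw [show (4:H →L[ℂ] H) = 1 + 1 + 1 + 1 by norm_num]; noncomm_ring
    rw [hsq₀] at e
    simp only [sub_self, add_zero] at e
    rw [← sub_eq_zero, e]
  have h4A : (4 : 𝔸) = algebraMap ℝ 𝔸 4 := (map_ofNat _ 4).symm
  have hsqrt4 : Real.sqrt 4 = 2 := by
    rw [show (4:ℝ) = 2 ^ 2 by norm_num, Real.sqrt_sq (by norm_num)]
  have hcfc : cfc Real.sqrt ((F₀ + F₀) * (F₀ + F₀)) = algebraMap ℝ 𝔸 2 := by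
    rw [hT, h4A, cfc_algebraMap (R := ℝ) 4 Real.sqrt, hsqrt4]
  have hu : (algebraMap ℝ 𝔸 2) * (algebraMap ℝ 𝔸 2⁻¹) = 1 := by
    rw [← map_mul]; norm_num
  have hu' : (algebraMap ℝ 𝔸 2⁻¹) * (algebraMap ℝ 𝔸 2) = 1 := by
    rw [← map_mul]; norm_num
  have hinv : Ring.inverse (algebraMap ℝ 𝔸 2) = algebraMap ℝ 𝔸 2⁻¹ := by
    have := Ring.inverse_unit ⟨algebraMap ℝ 𝔸 2, algebraMap ℝ 𝔸 2⁻¹, hu, hu'⟩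
    simpa using this
  rw [uAux, hcfc, hinv]
  calc (F₀ + F₀) * algebraMap ℝ 𝔸 2⁻¹ * F₀ = algebraMap ℝ 𝔸 2⁻¹ * ((F₀ + F₀) * F₀) := by
        rw [← Algebra.commutes 2⁻¹ (F₀ + F₀)]; noncomm_ring
    _ = algebraMap ℝ 𝔸 2⁻¹ * (F₀ * F₀ + F₀ * F₀) := by noncomm_ring
    _ = algebraMap ℝ 𝔸 2⁻¹ * algebraMap ℝ 𝔸 2 := by
        rw [hsq₀]
        congr 1
        rw [map_ofNat _ 2]
        norm_num
    _ = 1 := hu'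

end Main

/-- For `F₀ ∈ P(H)` (`H` a separable infinite-dimensional complex Hilbert
space), the conjugation map `U(H) → P(H)`, `v ↦ v F₀ v⁻¹`, admits a continuous local
section near `F₀`: there are an open neighborhood `N` of `F₀` in `P(H)` and a continuous
map `u : N → U(H)` with `u F₀ = 1` and `u F * F₀ * (u F)⁻¹ = F` for all `F ∈ N`. -/
theorem stmt7 {H : Type*} [NormedAddCommGroup H] [InnerProductSpace ℂ H] [CompleteSpace H]
    [TopologicalSpace.SeparableSpace H] (hinf : ¬FiniteDimensional ℂ H)
    (F₀ : H →L[ℂ] H) (hF₀ : MemP F₀) :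
    ∃ N : Set {F : H →L[ℂ] H // MemP F}, IsOpen N ∧
      ∃ hmem : (⟨F₀, hF₀⟩ : {F : H →L[ℂ] H // MemP F}) ∈ N,
      ∃ u : N → unitary (H →L[ℂ] H),
        Continuous u ∧
        u ⟨⟨F₀, hF₀⟩, hmem⟩ = 1 ∧
        ∀ F : N, (u F : H →L[ℂ] H) * F₀ * star (u F : H →L[ℂ] H) = ((F : {F : H →L[ℂ] H // MemP F}) : H →L[ℂ] H) := by
  haveI : Nontrivial H := by
    by_contra hn
    rw [not_nontrivial_iff_subsingleton] at hn
    exact hinf inferInstance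
  have hsa₀ : IsSelfAdjoint F₀ := hF₀.1
  have hsq₀ : F₀ * F₀ = 1 := hF₀.2.1
  set N : Set {F : H →L[ℂ] H // MemP F} :=
    {F : {F : H →L[ℂ] H // MemP F} | ‖(F : H →L[ℂ] H) - F₀‖ < 1} with hN_def
  have hopen : IsOpen N := by
    have hc : Continuous (fun F : {F : H →L[ℂ] H // MemP F} => ‖(F : H →L[ℂ] H) - F₀‖) :=
      (continuous_subtype_val.sub continuous_const).norm
    exact IsOpen.preimage hc isOpen_Iio
  have hmem : (⟨F₀, hF₀⟩ : {F : H →L[ℂ] H // MemP F}) ∈ N := by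
    simp [hN_def]
  have hFsa : ∀ F : N, IsSelfAdjoint ((F : {F : H →L[ℂ] H // MemP F}) : H →L[ℂ] H) :=
    fun F => F.1.2.1
  have hFsq : ∀ F : N, ((F : {F : H →L[ℂ] H // MemP F}) : H →L[ℂ] H)
      * ((F : {F : H →L[ℂ] H // MemP F}) : H →L[ℂ] H) = 1 := fun F => F.1.2.2.1
  have hFclose : ∀ F : N, ‖((F : {F : H →L[ℂ] H // MemP F}) : H →L[ℂ] H) - F₀‖ < 1 :=
    fun F => F.2
  have hspec := fun F : N => uAux_spec F₀ _ hsa₀ hsq₀ (hFsa F) (hFsq F) (hFclose F)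
  have hpre := fun F : N => aux_pre F₀ _ hsa₀ hsq₀ (hFsa F) (hFsq F) (hFclose F)
  refine ⟨N, hopen, hmem,
    fun F => ⟨uAux F₀ ((F : {F : H →L[ℂ] H // MemP F}) : H →L[ℂ] H),
      (Unitary.mem_iff).mpr ⟨(hspec F).1, (hspec F).2.1⟩⟩, ?_, ?_, fun F => (hspec F).2.2⟩
  · apply Continuous.subtype_mk
    have hg : Continuous (fun F : N => ((F : {F : H →L[ℂ] H // MemP F}) : H →L[ℂ] H)) :=
      continuous_subtype_val.comp continuous_subtype_val
    have hBc : Continuous (fun F : N =>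
        ((F : {F : H →L[ℂ] H // MemP F}) : H →L[ℂ] H) + F₀) := hg.add continuous_const
    have hTc : Continuous (fun F : N =>
        (((F : {F : H →L[ℂ] H // MemP F}) : H →L[ℂ] H) + F₀)
          * (((F : {F : H →L[ℂ] H // MemP F}) : H →L[ℂ] H) + F₀)) := hBc.mul hBc
    have hSc : Continuous (fun F : N => cfc Real.sqrt
        ((((F : {F : H →L[ℂ] H // MemP F}) : H →L[ℂ] H) + F₀)
          * (((F : {F : H →L[ℂ] H // MemP F}) : H →L[ℂ] H) + F₀))) :=
      aux_contOn_sqrt.comp_continuous hTc (fun F => ⟨(hpre F).1, (hpre F).2.1⟩)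
    have hSic : Continuous (fun F : N => Ring.inverse (cfc Real.sqrt
        ((((F : {F : H →L[ℂ] H // MemP F}) : H →L[ℂ] H) + F₀)
          * (((F : {F : H →L[ℂ] H // MemP F}) : H →L[ℂ] H) + F₀)))) := by
      rw [continuous_iff_continuousAt]
      intro F
      have hU := (hpre F).2.2
      have hinvc : ContinuousAt Ring.inverse (cfc Real.sqrt
          ((((F : {F : H →L[ℂ] H // MemP F}) : H →L[ℂ] H) + F₀)
            * (((F : {F : H →L[ℂ] H // MemP F}) : H →L[ℂ] H) + F₀))) := by
        have := NormedRing.inverse_continuousAt hU.unit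
        rwa [IsUnit.unit_spec] at this
      exact ContinuousAt.comp (f := fun F : N => cfc Real.sqrt
        ((((F : {F : H →L[ℂ] H // MemP F}) : H →L[ℂ] H) + F₀)
          * (((F : {F : H →L[ℂ] H // MemP F}) : H →L[ℂ] H) + F₀))) hinvc hSc.continuousAt
    exact (hBc.mul hSic).mul continuous_const
  · refine Subtype.ext ?_
    show uAux F₀ F₀ = (1 : H →L[ℂ] H)
    exact uAux_self F₀ hsq₀
end

section
/- Let H be a real Hilbert space and let A be an invertible bounded skew-adjoint operator on H (i.e. A* = −A). Set J = A·(A*A)^{−1/2}. Then J is skew-adjoint with J² = −1, and for every t ∈ [0,1] the operator (1−t)·A + t·J is an invertible skew-adjoint operator; in particular A is joined, by a norm-continuous path inside the set of invertible skew-adjoint operators, to an operator J satisfying J² = −1. -/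
open ContinuousLinearMap

local notation "⟪" x ", " y "⟫" => @inner ℝ _ _ x y

namespace Stmt10Aux

variable {H : Type*} [NormedAddCommGroup H] [InnerProductSpace ℝ H] [CompleteSpace H]

lemma inner_move (B : H →L[ℝ] H) (hB : IsSelfAdjoint B) (x y : H) :
    ⟪B x, y⟫ = ⟪x, B y⟫ := by
  conv_lhs => rw [← hB.adjoint_eq]
  exact ContinuousLinearMap.adjoint_inner_left _ _ _

/-- Riesz's elementary argument: commuting positive operators have positive product. -/
lemma prod_nonneg (T P : H →L[ℝ] H) (hT : IsSelfAdjoint T)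
    (hT0 : ∀ y, 0 ≤ ⟪T y, y⟫) (hT1 : ∀ y, ⟪T y, y⟫ ≤ ⟪y, y⟫)
    (hP0 : ∀ y, 0 ≤ ⟪P y, y⟫) (hc : Commute T P) (x : H) :
    0 ≤ ⟪T (P x), x⟫ := by
  set f : ℕ → H →L[ℝ] H := fun n => (fun B => B - B * B)^[n] T with hf
  have hf0 : f 0 = T := rfl
  have hfs : ∀ n, f (n + 1) = f n - f n * f n := fun n => by
    simp only [hf]; rw [Function.iterate_succ_apply']
  have inv : ∀ n, IsSelfAdjoint (f n) ∧ Commute (f n) P ∧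
      (∀ y, 0 ≤ ⟪f n y, y⟫) ∧ (∀ y, ⟪f n y, y⟫ ≤ ⟪y, y⟫) := by
    intro n
    induction n with
    | zero => exact ⟨hT, hc, hT0, hT1⟩
    | succ n ih =>
      obtain ⟨sa, cm, h0, h1⟩ := ih
      have sa1 : IsSelfAdjoint ((1 : H →L[ℝ] H) - f n) :=
        (IsSelfAdjoint.one (R := H →L[ℝ] H)).sub sa
      have hpos1 : ∀ y, 0 ≤ ⟪((1 : H →L[ℝ] H) - f n) y, y⟫ := by
        intro y
        have := h1 y
        simp only [sub_apply, one_apply_eq_self, inner_sub_left]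
        linarith
      refine ⟨?_, ?_, ?_, ?_⟩
      · rw [hfs]
        have : star (f n - f n * f n) = f n - f n * f n := by
          rw [star_sub, star_mul, sa.star_eq]
        exact this
      · rw [hfs]; exact cm.sub_left (cm.mul_left cm)
      · intro y
        rw [hfs]
        have key : f n - f n * f n
            = f n * ((1 : H →L[ℝ] H) - f n) * f n
              + ((1 : H →L[ℝ] H) - f n) * (f n * ((1 : H →L[ℝ] H) - f n)) := by
          noncomm_ring
        rw [key]
        have e1 : ⟪(f n * ((1 : H →L[ℝ] H) - f n) * f n) y, y⟫
            = ⟪((1 : H →L[ℝ] H) - f n) (f n y), f n y⟫ := by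
          simp only [mul_apply_eq_comp]
          rw [inner_move _ sa]
        have e2 : ⟪(((1 : H →L[ℝ] H) - f n) * (f n * ((1 : H →L[ℝ] H) - f n))) y, y⟫
            = ⟪f n (((1 : H →L[ℝ] H) - f n) y), ((1 : H →L[ℝ] H) - f n) y⟫ := by
          simp only [mul_apply_eq_comp]
          rw [inner_move _ sa1]
        rw [add_apply, inner_add_left, e1, e2]
        have := hpos1 (f n y)
        have := h0 (((1 : H →L[ℝ] H) - f n) y)
        linarith
      · intro y
        rw [hfs]
        have e3 : ⟪(f n * f n) y, y⟫ = ⟪f n y, f n y⟫ := by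
          simp only [mul_apply_eq_comp]; rw [inner_move _ sa]
        have := real_inner_self_nonneg (x := f n y)
        have := h1 y
        simp only [sub_apply, inner_sub_left]
        simp only [mul_apply_eq_comp] at e3 ⊢
        rw [e3]
        linarith
  have tel : ∀ n, T = (∑ k ∈ Finset.range n, f k * f k) + f n := by
    intro n
    induction n with
    | zero => simp [hf0]
    | succ n ih =>
      rw [Finset.sum_range_succ, hfs]
      rw [ih]
      abel
  have expand : ∀ n, ⟪T (P x), x⟫
      = (∑ k ∈ Finset.range n, ⟪P ((f k) x), (f k) x⟫) + ⟪P x, f n x⟫ := by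
    intro n
    conv_lhs => rw [tel n]
    rw [add_apply, inner_add_left, ContinuousLinearMap.sum_apply, sum_inner]
    congr 1
    · refine Finset.sum_congr rfl fun k _ => ?_
      have hck : Commute (f k) P := (inv k).2.1
      have hsk : IsSelfAdjoint (f k) := (inv k).1
      have : (f k * f k) (P x) = f k (P (f k x)) := by
        have : f k * f k * P = f k * (P * f k) := by
          rw [mul_assoc, hck.eq]
        calc (f k * f k) (P x) = (f k * f k * P) x := rfl
          _ = (f k * (P * f k)) x := by rw [this]
          _ = f k (P (f k x)) := rfl
      rw [this, inner_move _ hsk]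
    · rw [inner_move _ (inv n).1]
  have lower : ∀ n, ⟪P x, f n x⟫ ≤ ⟪T (P x), x⟫ := by
    intro n
    rw [expand n]
    have : 0 ≤ ∑ k ∈ Finset.range n, ⟪P ((f k) x), (f k) x⟫ :=
      Finset.sum_nonneg fun k _ => hP0 _
    linarith
  set g : ℕ → ℝ := fun n => ⟪f n x, x⟫ with hg
  have hganti : Antitone g := by
    refine antitone_nat_of_succ_le fun n => ?_
    have e3 : ⟪(f n * f n) x, x⟫ = ⟪f n x, f n x⟫ := by
      simp only [mul_apply_eq_comp]; rw [inner_move _ (inv n).1]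
    have := real_inner_self_nonneg (x := f n x)
    simp only [hg, hfs, sub_apply, inner_sub_left]
    simp only [mul_apply_eq_comp] at e3 ⊢
    rw [e3]
    linarith
  have hgbdd : BddBelow (Set.range g) := ⟨0, by rintro - ⟨n, rfl⟩; exact (inv n).2.2.1 x⟩
  have hglim : Filter.Tendsto g Filter.atTop (nhds (⨅ n, g n)) :=
    tendsto_atTop_ciInf hganti hgbdd
  have hdiff : Filter.Tendsto (fun n => g n - g (n + 1)) Filter.atTop (nhds 0) := by
    have := hglim.sub (hglim.comp (Filter.tendsto_add_atTop_nat 1))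
    simpa using this
  have hnormsq : ∀ n, ⟪f n x, f n x⟫ = g n - g (n + 1) := by
    intro n
    have e3 : ⟪(f n * f n) x, x⟫ = ⟪f n x, f n x⟫ := by
      simp only [mul_apply_eq_comp]; rw [inner_move _ (inv n).1]
    simp only [hg, hfs, sub_apply, inner_sub_left]
    simp only [mul_apply_eq_comp] at e3 ⊢
    rw [e3]
    ring
  have hnorm0 : Filter.Tendsto (fun n => ‖f n x‖) Filter.atTop (nhds 0) := by
    have h1 : Filter.Tendsto (fun n => ⟪f n x, f n x⟫) Filter.atTop (nhds 0) := by
      simp only [hnormsq]; exact hdiff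
    have h2 : Filter.Tendsto (fun n => Real.sqrt ⟪f n x, f n x⟫) Filter.atTop (nhds 0) := by
      have := (Real.continuous_sqrt.tendsto 0).comp h1
      simpa [Function.comp_def] using this
    convert h2 using 2 with n
    rw [real_inner_self_eq_norm_sq, Real.sqrt_sq (norm_nonneg _)]
  have hPf0 : Filter.Tendsto (fun n => ⟪P x, f n x⟫) Filter.atTop (nhds 0) := by
    apply squeeze_zero_norm (a := fun n => ‖P x‖ * ‖f n x‖)
    · intro n
      simpa using abs_real_inner_le_norm (P x) (f n x)
    · simpa using hnorm0.const_mul ‖P x‖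
  exact le_of_tendsto hPf0 (Filter.Eventually.of_forall lower)

lemma coercive (S : H →L[ℝ] H) (hsa : IsSelfAdjoint S) (hpos : ∀ x, 0 ≤ ⟪S x, x⟫)
    (hu : IsUnit S) : ∃ m : ℝ, 0 < m ∧ ∀ x, m * ‖x‖ ^ 2 ≤ ⟪S x, x⟫ := by
  have genCS : ∀ v w : H, ⟪S v, w⟫ ^ 2 ≤ ⟪S v, v⟫ * ⟪S w, w⟫ := by
    intro v w
    have hquad : ∀ c : ℝ, 0 ≤ ⟪S w, w⟫ * (c * c) + (2 * ⟪S v, w⟫) * c + ⟪S v, v⟫ := by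
      intro c
      have h := hpos (v + c • w)
      have hexp : ⟪S (v + c • w), v + c • w⟫
          = ⟪S v, v⟫ + c * ⟪S v, w⟫ + (c * ⟪S w, v⟫ + c * c * ⟪S w, w⟫) := by
        rw [map_add, map_smul]
        simp [inner_add_left, inner_add_right, real_inner_smul_left, real_inner_smul_right]
        ring
      have hsym : ⟪S w, v⟫ = ⟪S v, w⟫ := by
        rw [inner_move S hsa, real_inner_comm]
      rw [hexp, hsym] at h
      linarith
    have hd := discrim_le_zero hquad
    rw [discrim] at hd
    nlinarith
  obtain ⟨u, hu⟩ := hu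
  set R : H →L[ℝ] H := (↑u⁻¹ : H →L[ℝ] H) with hR
  have hSR : ∀ x : H, S (R x) = x := by
    intro x
    have : (↑u * ↑u⁻¹ : H →L[ℝ] H) = 1 := u.mul_inv
    rw [hu] at this
    calc S (R x) = (S * R) x := rfl
      _ = (1 : H →L[ℝ] H) x := by rw [hR, this]
      _ = x := rfl
  by_cases hR0 : R = 0
  · refine ⟨1, one_pos, fun x => ?_⟩
    have : x = 0 := by rw [← hSR x, hR0]; simp
    simp [this]
  · have hRn : 0 < ‖R‖ := norm_pos_iff.mpr hR0
    refine ⟨‖R‖⁻¹, inv_pos.mpr hRn, fun x => ?_⟩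
    by_cases hx : x = 0
    · simp [hx]
    · have hxn : 0 < ‖x‖ := norm_pos_iff.mpr hx
      have h1 : ⟪x, x⟫ ^ 2 ≤ ⟪x, R x⟫ * ⟪S x, x⟫ := by
        have := genCS (R x) x
        rwa [hSR x] at this
      have h2 : ⟪x, R x⟫ ≤ ‖x‖ * ‖R x‖ := real_inner_le_norm _ _
      have h3 : ‖R x‖ ≤ ‖R‖ * ‖x‖ := R.le_opNorm x
      have h4 : ⟪x, x⟫ = ‖x‖ ^ 2 := real_inner_self_eq_norm_sq x
      have h5 : 0 ≤ ⟪S x, x⟫ := hpos x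
      rw [inv_mul_le_iff₀ hRn]
      have hA : ‖x‖ ^ 2 * ‖x‖ ^ 2 ≤ ⟪x, R x⟫ * ⟪S x, x⟫ := by
        calc ‖x‖ ^ 2 * ‖x‖ ^ 2 = ⟪x, x⟫ ^ 2 := by rw [h4]; ring
          _ ≤ ⟪x, R x⟫ * ⟪S x, x⟫ := h1
      have hB : ⟪x, R x⟫ * ⟪S x, x⟫ ≤ (‖x‖ * ‖R x‖) * ⟪S x, x⟫ :=
        mul_le_mul_of_nonneg_right h2 h5
      have hC : (‖x‖ * ‖R x‖) * ⟪S x, x⟫ ≤ (‖x‖ * (‖R‖ * ‖x‖)) * ⟪S x, x⟫ :=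
        mul_le_mul_of_nonneg_right (mul_le_mul_of_nonneg_left h3 (norm_nonneg x)) h5
      have hD : ‖x‖ ^ 2 * ‖x‖ ^ 2 ≤ ‖x‖ ^ 2 * (‖R‖ * ⟪S x, x⟫) := by nlinarith
      have := le_of_mul_le_mul_left hD (by positivity : (0:ℝ) < ‖x‖ ^ 2)
      linarith

end Stmt10Aux

set_option maxHeartbeats 1000000 in
set_option synthInstance.maxHeartbeats 200000 in
/-- Let `A` be an invertible bounded skew-adjoint operator on a real
Hilbert space, and let `S` be the positive square root of `(A*A)⁻¹` (so that
`J = A * S = A • (A*A)^(-1/2)`).  Then `J` is skew-adjoint with `J * J = -1`, and the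
straight-line segment from `A` to `J` consists of invertible skew-adjoint operators; in
particular `A` is joined to a complex structure by a norm-continuous path inside the
invertible skew-adjoint operators. -/
theorem stmt10 {H : Type*} [NormedAddCommGroup H] [InnerProductSpace ℝ H] [CompleteSpace H]
    (A S : H →L[ℝ] H)
    (hA : ContinuousLinearMap.adjoint A = -A) (hAinv : IsUnit A)
    (hS_sa : IsSelfAdjoint S)
    (hS_pos : ∀ x : H, 0 ≤ (inner ℝ (S x) x : ℝ))
    (hS : S * S * (ContinuousLinearMap.adjoint A * A) = 1) :
    ContinuousLinearMap.adjoint (A * S) = -(A * S) ∧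
    (A * S) * (A * S) = -1 ∧
    (∀ t ∈ Set.Icc (0 : ℝ) 1,
      ContinuousLinearMap.adjoint ((1 - t) • A + t • (A * S))
          = -((1 - t) • A + t • (A * S)) ∧
      IsUnit ((1 - t) • A + t • (A * S))) ∧
    JoinedIn {T : H →L[ℝ] H | ContinuousLinearMap.adjoint T = -T ∧ IsUnit T} A (A * S) := by
  classical
  obtain ⟨N, hN⟩ : ∃ N : H →L[ℝ] H, N = ContinuousLinearMap.adjoint A * A := ⟨_, rfl⟩
  rw [← hN] at hS
  have hA' : star A = -A := by rw [ContinuousLinearMap.star_eq_adjoint, hA]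
  have hsN : star N = N := by
    rw [hN, star_mul, ContinuousLinearMap.star_eq_adjoint,
      ContinuousLinearMap.star_eq_adjoint, ContinuousLinearMap.adjoint_adjoint]
  have hS1 : S * S * N = 1 := hS
  have hNS : N * (S * S) = 1 := by
    have h := congrArg star hS1
    simp only [star_mul, star_one] at h
    rw [hsN, hS_sa.star_eq] at h
    exact h
  have h1 : (N * S) * S = 1 := by rw [mul_assoc]; exact hNS
  have h2 : S * (S * N) = 1 := by rw [← mul_assoc]; exact hS1
  have hbc : N * S = S * N := by
    calc N * S = (N * S) * (S * (S * N)) := by rw [h2, mul_one]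
      _ = ((N * S) * S) * (S * N) := by noncomm_ring
      _ = S * N := by rw [h1, one_mul]
  have hSNS : (S * N) * S = 1 := by rw [← hbc]; exact h1
  have hSunit : IsUnit S := ⟨⟨S, S * N, h2, hSNS⟩, rfl⟩
  have hA2 : A * A = -N := by rw [hN, hA]; noncomm_ring
  have hAN : A * N = N * A := by rw [hN, hA]; noncomm_ring
  have hASS : A * (S * S) = (S * S) * A := by
    calc A * (S * S) = ((S * S) * N) * (A * (S * S)) := by rw [hS1, one_mul]
      _ = (S * S) * ((N * A) * (S * S)) := by noncomm_ring
      _ = (S * S) * ((A * N) * (S * S)) := by rw [hAN]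
      _ = ((S * S) * A) * (N * (S * S)) := by noncomm_ring
      _ = (S * S) * A := by rw [hNS, mul_one]
  obtain ⟨D, hD⟩ : ∃ D : H →L[ℝ] H, D = S * A - A * S := ⟨_, rfl⟩
  have hD_sa : IsSelfAdjoint D := by
    rw [hD, IsSelfAdjoint, star_sub, star_mul, star_mul, hS_sa.star_eq, hA']
    noncomm_ring
  have hanti : S * D + D * S = 0 := by
    have expand : S * D + D * S = (S * S) * A - A * (S * S) := by rw [hD]; noncomm_ring
    rw [expand, hASS, sub_self]
  have hSD : S * D = -(D * S) := eq_neg_of_add_eq_zero_left hanti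
  obtain ⟨m, hm, hco⟩ := Stmt10Aux.coercive S hS_sa hS_pos hSunit
  have hD0 : D = 0 := by
    by_cases hS0 : S = 0
    · have h10 : (1 : H →L[ℝ] H) = 0 := by rw [← hS1, hS0]; simp
      calc D = D * 1 := (mul_one D).symm
        _ = D * 0 := by rw [h10]
        _ = 0 := mul_zero D
    · have hSnorm : 0 < ‖S‖ := norm_pos_iff.mpr hS0
      obtain ⟨T, hT⟩ : ∃ T : H →L[ℝ] H, T = ‖S‖⁻¹ • S := ⟨_, rfl⟩
      have hT_sa : IsSelfAdjoint T := hT ▸ (IsSelfAdjoint.all _).smul hS_sa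
      have hT0 : ∀ y, 0 ≤ ⟪T y, y⟫ := by
        intro y
        rw [hT]
        simp only [coe_smul', Pi.smul_apply, real_inner_smul_left]
        exact mul_nonneg (inv_nonneg.mpr (norm_nonneg S)) (hS_pos y)
      have hT1 : ∀ y, ⟪T y, y⟫ ≤ ⟪y, y⟫ := by
        intro y
        have hb : ⟪S y, y⟫ ≤ ‖S‖ * (‖y‖ * ‖y‖) := by
          calc ⟪S y, y⟫ ≤ ‖S y‖ * ‖y‖ := real_inner_le_norm _ _
            _ ≤ (‖S‖ * ‖y‖) * ‖y‖ :=
                mul_le_mul_of_nonneg_right (S.le_opNorm y) (norm_nonneg y)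
            _ = ‖S‖ * (‖y‖ * ‖y‖) := by ring
        rw [hT]
        simp only [coe_smul', Pi.smul_apply, real_inner_smul_left]
        rw [real_inner_self_eq_norm_mul_norm, inv_mul_le_iff₀ hSnorm]
        exact hb
      have hP0 : ∀ y, 0 ≤ ⟪(D * D) y, y⟫ := by
        intro y
        have e : ⟪(D * D) y, y⟫ = ⟪D y, D y⟫ := by
          simp only [mul_apply_eq_comp]; rw [Stmt10Aux.inner_move D hD_sa]
        rw [e]; exact real_inner_self_nonneg
      have hc0 : S * (D * D) = (D * D) * S := by
        calc S * (D * D) = (S * D) * D := by rw [mul_assoc]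
          _ = (-(D * S)) * D := by rw [hSD]
          _ = -(D * (S * D)) := by noncomm_ring
          _ = -(D * (-(D * S))) := by rw [hSD]
          _ = (D * D) * S := by noncomm_ring
      have hcomm : Commute T (D * D) := by
        rw [hT]
        have e1 : (‖S‖⁻¹ • S) * (D * D) = ‖S‖⁻¹ • (S * (D * D)) := smul_mul_assoc _ _ _
        have e2 : (D * D) * (‖S‖⁻¹ • S) = ‖S‖⁻¹ • ((D * D) * S) := mul_smul_comm _ _ _
        unfold Commute SemiconjBy
        rw [e1, e2, hc0]
      have key : ∀ y, 0 ≤ ⟪T ((D * D) y), y⟫ := fun y =>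
        Stmt10Aux.prod_nonneg T (D * D) hT_sa hT0 hT1 hP0 hcomm y
      have hDx : ∀ y, D y = 0 := by
        intro y
        have h6 : 0 ≤ ⟪S ((D * D) y), y⟫ := by
          have hk := key y
          rw [hT] at hk
          simp only [coe_smul', Pi.smul_apply, real_inner_smul_left] at hk
          have hip : 0 < ‖S‖⁻¹ := inv_pos.mpr hSnorm
          nlinarith
        have hop : S * (D * D) = -(D * (S * D)) := by
          calc S * (D * D) = (S * D) * D := by rw [mul_assoc]
            _ = (-(D * S)) * D := by rw [hSD]
            _ = -(D * (S * D)) := by noncomm_ring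
        have happ : S ((D * D) y) = -(D (S (D y))) := by
          calc S ((D * D) y) = (S * (D * D)) y := rfl
            _ = (-(D * (S * D))) y := by rw [hop]
            _ = -(D (S (D y))) := rfl
        have h7 : ⟪S ((D * D) y), y⟫ = -⟪S (D y), D y⟫ := by
          rw [happ, inner_neg_left, Stmt10Aux.inner_move D hD_sa]
        have h8 : ⟪S (D y), D y⟫ ≤ 0 := by rw [h7] at h6; linarith
        have h9 := hco (D y)
        have h12 : ‖D y‖ ^ 2 ≤ 0 := by nlinarith
        have h13 : ‖D y‖ ^ 2 = 0 := le_antisymm h12 (sq_nonneg _)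
        have h14 : ‖D y‖ = 0 := by
          have := (pow_eq_zero_iff (n := 2) two_ne_zero).mp h13
          exact this
        exact norm_eq_zero.mp h14
      ext y
      rw [hDx y]; rfl
  have hSA : S * A = A * S := by
    rw [hD] at hD0
    exact sub_eq_zero.mp hD0
  have hstarAS : star (A * S) = -(A * S) := by
    rw [star_mul, hS_sa.star_eq, hA']
    calc S * -A = -(S * A) := by noncomm_ring
      _ = -(A * S) := by rw [hSA]
  have G1 : ContinuousLinearMap.adjoint (A * S) = -(A * S) := by
    rw [← ContinuousLinearMap.star_eq_adjoint]; exact hstarAS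
  have G2 : (A * S) * (A * S) = -1 := by
    calc (A * S) * (A * S) = A * ((S * A) * S) := by noncomm_ring
      _ = A * ((A * S) * S) := by rw [hSA]
      _ = (A * A) * (S * S) := by noncomm_ring
      _ = (-N) * (S * S) := by rw [hA2]
      _ = -(N * (S * S)) := by noncomm_ring
      _ = -1 := by rw [hNS]
  have hseg : ∀ t ∈ Set.Icc (0 : ℝ) 1,
      ContinuousLinearMap.adjoint ((1 - t) • A + t • (A * S))
          = -((1 - t) • A + t • (A * S)) ∧
      IsUnit ((1 - t) • A + t • (A * S)) := by
    intro t ht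
    obtain ⟨ht0, ht1⟩ := ht
    constructor
    · rw [← ContinuousLinearMap.star_eq_adjoint, star_add, star_smul, star_smul, hA', hstarAS]
      simp only [star_trivial]
      module
    · have hfact : (1 - t) • A + t • (A * S)
          = A * ((1 - t) • (1 : H →L[ℝ] H) + t • S) := by
        rw [mul_add, mul_smul_comm, mul_smul_comm, mul_one]
      rw [hfact]
      refine hAinv.mul ?_
      set c : ℝ := min 1 m with hcdef
      have hc : 0 < c := lt_min one_pos hm
      have hcoPt : ∀ x : H, ‖x‖ ^ 2 * c
          ≤ ‖⟪((1 - t) • (1 : H →L[ℝ] H) + t • S) x, x⟫‖ := by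
        intro x
        have hip : ⟪((1 - t) • (1 : H →L[ℝ] H) + t • S) x, x⟫
            = (1 - t) * ⟪x, x⟫ + t * ⟪S x, x⟫ := by
          simp [add_apply, coe_smul', Pi.smul_apply, one_apply, inner_add_left,
            real_inner_smul_left]
        have hcle1 : c ≤ 1 := min_le_left _ _
        have hclem : c ≤ m := min_le_right _ _
        have hmS := hco x
        have ha : t * (m * ‖x‖ ^ 2) ≤ t * ⟪S x, x⟫ :=
          mul_le_mul_of_nonneg_left hmS ht0
        have h2 : c * ‖x‖ ^ 2 ≤ ⟪((1 - t) • (1 : H →L[ℝ] H) + t • S) x, x⟫ := by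
          rw [hip, real_inner_self_eq_norm_sq]
          nlinarith [mul_nonneg (mul_nonneg (sub_nonneg.mpr ht1) (sub_nonneg.mpr hcle1))
              (sq_nonneg ‖x‖),
            mul_nonneg (mul_nonneg ht0 (sub_nonneg.mpr hclem)) (sq_nonneg ‖x‖)]
        calc ‖x‖ ^ 2 * c = c * ‖x‖ ^ 2 := mul_comm _ _
          _ ≤ ⟪((1 - t) • (1 : H →L[ℝ] H) + t • S) x, x⟫ := h2
          _ ≤ ‖⟪((1 - t) • (1 : H →L[ℝ] H) + t • S) x, x⟫‖ := le_abs_self _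
      refine ContinuousLinearMap.isUnit_of_forall_le_norm_inner_map _
        (c := c.toNNReal) (Real.toNNReal_pos.mpr hc) ?_
      intro x
      rw [Real.coe_toNNReal _ hc.le]
      exact hcoPt x
  refine ⟨G1, G2, hseg, ?_⟩
  refine ⟨⟨⟨fun u => (1 - (u : ℝ)) • A + (u : ℝ) • (A * S), ?_⟩, ?_, ?_⟩, ?_⟩
  · exact ((continuous_const.sub continuous_subtype_val).smul continuous_const).add
      (continuous_subtype_val.smul continuous_const)
  · simp
  · simp
  · intro u
    exact hseg (u : ℝ) u.2
end

section
/- For a positive integer n define m(n) = ∏_q q^{⌊n/(q−1)⌋}, the product taken over all primes q with q − 1 ≤ n. Then for every integer r ≥ 1, the rational number m(2r) · B_{2r} / (2r)! has denominator (in lowest terms) a power of 2; equivalently, for every odd prime q the q-adic valuation of the rational number B_{2r} / (2r)! is at least −⌊2r/(q−1)⌋. -/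
/-- Adams' number `m(n) = ∏_q q^⌊n/(q-1)⌋`, the product over all primes `q` with
`q - 1 ≤ n`. -/
def adamsNumber (n : ℕ) : ℕ :=
  ∏ q ∈ (Finset.range (n + 2)).filter (fun q => q.Prime ∧ q - 1 ≤ n), q ^ (n / (q - 1))

lemma digitsum_pos (p m : ℕ) (hm : m ≠ 0) : 1 ≤ (p.digits m).sum := by
  by_contra h
  push_neg at h
  interval_cases hs : (p.digits m).sum
  have hall := List.sum_eq_zero_iff.mp hs
  exact Nat.getLast_digit_ne_zero p hm
    (hall _ (List.getLast_mem (Nat.digits_ne_nil_iff_ne_zero.mpr hm)))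

lemma padicValNat_factorial_le' {q : ℕ} (hq : q.Prime) {m : ℕ} (hm : 1 ≤ m) :
    padicValNat q m.factorial ≤ (m - 1) / (q - 1) := by
  haveI : Fact q.Prime := ⟨hq⟩
  have h := sub_one_mul_padicValNat_factorial (p := q) m
  have hs : 1 ≤ (q.digits m).sum := digitsum_pos q m (by omega)
  have hsle : (q.digits m).sum ≤ m := Nat.digit_sum_le q m
  have h2 : (q - 1) * padicValNat q m.factorial ≤ m - 1 := by omega
  rw [Nat.le_div_iff_mul_le (by have := hq.two_le; omega), mul_comm]
  omega

lemma floor_add_le {q : ℕ} (hq : q.Prime) {i n : ℕ} (hi : i < n) :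
    i / (q - 1) + padicValNat q ((n + 1 - i).factorial) ≤ n / (q - 1) := by
  have h1 : padicValNat q ((n + 1 - i).factorial) ≤ (n - i) / (q - 1) := by
    have := padicValNat_factorial_le' hq (m := n + 1 - i) (by omega)
    have heq : n + 1 - i - 1 = n - i := by omega
    rwa [heq] at this
  calc i / (q - 1) + padicValNat q ((n + 1 - i).factorial)
      ≤ i / (q - 1) + (n - i) / (q - 1) := by omega
    _ ≤ (i + (n - i)) / (q - 1) := Nat.add_div_le_add_div _ _ _
    _ = n / (q - 1) := by congr 1; omega

lemma le_padicValRat_sum (q : ℕ) [Fact q.Prime] {c : ℤ} (hc : c ≤ 0) {n : ℕ} {F : ℕ → ℚ}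
    (h : ∀ i < n, c ≤ padicValRat q (F i)) :
    c ≤ padicValRat q (∑ i ∈ Finset.range n, F i) := by
  induction n with
  | zero => simpa [padicValRat.zero] using hc
  | succ n ih =>
    rw [Finset.sum_range_succ]
    by_cases h0 : (∑ i ∈ Finset.range n, F i) + F n = 0
    · rw [h0, padicValRat.zero]; exact hc
    · refine le_trans ?_ (padicValRat.min_le_padicValRat_add h0)
      exact le_min (ih fun i hi => h i (hi.trans (Nat.lt_succ_self n)))
        (h n (Nat.lt_succ_self n))

lemma bernoulli_div_factorial_val {q : ℕ} (hq : q.Prime) (n : ℕ) :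
    -((n / (q - 1) : ℕ) : ℤ) ≤ padicValRat q (bernoulli n / (n.factorial : ℚ)) := by
  haveI : Fact q.Prime := ⟨hq⟩
  induction n using Nat.strong_induction_on with
  | _ n ih =>
  rcases Nat.eq_zero_or_pos n with hn | hn
  · subst hn; simp [padicValRat.zero]
  -- the recurrence
  have hfac : ∀ m : ℕ, (m.factorial : ℚ) ≠ 0 := fun m =>
    Nat.cast_ne_zero.mpr (Nat.factorial_ne_zero m)
  have hsb := sum_bernoulli (n + 1)
  rw [if_neg (by omega)] at hsb
  have hterm : ∀ k, k ≤ n → (((n + 1).choose k : ℚ) * bernoulli k) / ((n + 1).factorial : ℚ)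
      = bernoulli k / (k.factorial : ℚ) / (((n + 1 - k).factorial : ℕ) : ℚ) := by
    intro k hk
    rw [Nat.cast_choose ℚ (hk.trans (Nat.le_succ n))]
    field_simp
  have hsum : ∑ k ∈ Finset.range (n + 1),
      bernoulli k / (k.factorial : ℚ) / (((n + 1 - k).factorial : ℕ) : ℚ) = 0 := by
    have heq : ∑ k ∈ Finset.range (n + 1),
        bernoulli k / (k.factorial : ℚ) / (((n + 1 - k).factorial : ℕ) : ℚ)
        = ∑ k ∈ Finset.range (n + 1),
          (((n + 1).choose k : ℚ) * bernoulli k) / ((n + 1).factorial : ℚ) :=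
      Finset.sum_congr rfl fun k hk =>
        (hterm k (Nat.lt_succ_iff.mp (Finset.mem_range.mp hk))).symm
    rw [heq, ← Finset.sum_div, hsb, zero_div]
  rw [Finset.sum_range_succ] at hsum
  have hlast : bernoulli n / (n.factorial : ℚ) / (((n + 1 - n).factorial : ℕ) : ℚ) = bernoulli n / (n.factorial : ℚ) := by
    have : n + 1 - n = 1 := by omega
    rw [this]; norm_num
  rw [hlast] at hsum
  have hkey : bernoulli n / (n.factorial : ℚ)
      = -∑ k ∈ Finset.range n, bernoulli k / (k.factorial : ℚ) / (((n + 1 - k).factorial : ℕ) : ℚ) := by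
    linarith
  rw [hkey, padicValRat.neg]
  refine le_padicValRat_sum q (neg_nonpos.mpr (Int.natCast_nonneg _)) ?_
  intro i hi
  by_cases hB : (bernoulli i : ℚ) = 0
  · rw [hB, zero_div, zero_div, padicValRat.zero]
    exact neg_nonpos.mpr (Int.natCast_nonneg _)
  · have hBi : (bernoulli i : ℚ) / (i.factorial : ℚ) ≠ 0 := div_ne_zero hB (hfac i)
    rw [padicValRat.div hBi (hfac _), padicValRat.of_nat]
    have h1 := ih i hi
    have h2 : (i / (q - 1) : ℕ) + padicValNat q ((n + 1 - i).factorial) ≤ n / (q - 1) :=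
      floor_add_le hq hi
    have h2' : ((i / (q - 1) : ℕ) : ℤ) + (padicValNat q ((n + 1 - i).factorial) : ℤ)
        ≤ ((n / (q - 1) : ℕ) : ℤ) := by exact_mod_cast h2
    linarith

/-- For every integer `r ≥ 1`, the rational number
`m(2r) * B_{2r} / (2r)!` has denominator a power of `2`; equivalently, for every odd prime
`q`, the `q`-adic valuation of `B_{2r} / (2r)!` is at least `-⌊2r/(q-1)⌋`. -/
theorem stmt14 (r : ℕ) (hr : 1 ≤ r) :
    (∃ k : ℕ,
      ((adamsNumber (2 * r) : ℚ) * bernoulli (2 * r) / ((2 * r).factorial : ℚ)).den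
        = 2 ^ k) ∧
    ∀ q : ℕ, q.Prime → Odd q →
      -((2 * r / (q - 1) : ℕ) : ℤ)
        ≤ padicValRat q (bernoulli (2 * r) / ((2 * r).factorial : ℚ)) := by
  constructor
  · set n := 2 * r with hn
    by_cases hB : (bernoulli n : ℚ) = 0
    · exact ⟨0, by simp [hB]⟩
    set x : ℚ := (adamsNumber n : ℚ) * bernoulli n / (n.factorial : ℚ) with hx
    have hm0 : adamsNumber n ≠ 0 := by
      apply Finset.prod_ne_zero_iff.mpr
      intro q hq
      simp only [Finset.mem_filter] at hq
      exact pow_ne_zero _ hq.2.1.ne_zero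
    have hxne : x ≠ 0 := by
      apply div_ne_zero (mul_ne_zero (Nat.cast_ne_zero.mpr hm0) hB)
        (Nat.cast_ne_zero.mpr (Nat.factorial_ne_zero n))
    -- every odd prime has nonneg valuation on x
    have hval : ∀ q : ℕ, q.Prime → q ≠ 2 → 0 ≤ padicValRat q x := by
      intro q hq hq2
      haveI : Fact q.Prime := ⟨hq⟩
      have hmval : ((n / (q - 1) : ℕ) : ℤ) ≤ padicValNat q (adamsNumber n) := by
        rcases le_or_gt (q - 1) n with hle | hlt
        · have hmem : q ∈ (Finset.range (n + 2)).filter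
              (fun q => q.Prime ∧ q - 1 ≤ n) := by
            simp only [Finset.mem_filter, Finset.mem_range]
            have := hq.two_le
            exact ⟨by omega, hq, hle⟩
          have hdvd : q ^ (n / (q - 1)) ∣ adamsNumber n :=
            Finset.dvd_prod_of_mem _ hmem
          have := (Nat.Prime.pow_dvd_iff_le_factorization hq hm0).mp hdvd
          rw [Nat.factorization_def _ hq] at this
          exact_mod_cast this
        · have : n / (q - 1) = 0 := Nat.div_eq_of_lt (by omega)
          rw [this]
          exact_mod_cast Nat.zero_le _
      have hbval := bernoulli_div_factorial_val hq n
      have hxeq : x = (adamsNumber n : ℚ) * (bernoulli n / (n.factorial : ℚ)) := by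
        rw [hx]; ring
      rw [hxeq, padicValRat.mul (Nat.cast_ne_zero.mpr hm0)
        (div_ne_zero hB (Nat.cast_ne_zero.mpr (Nat.factorial_ne_zero n))),
        padicValRat.of_nat]
      linarith
    -- so the denominator has no odd prime factors
    have hden : ∀ p : ℕ, p.Prime → p ∣ x.den → p = 2 := by
      intro p hp hpd
      by_contra hp2
      haveI : Fact p.Prime := ⟨hp⟩
      have h0 := hval p hp hp2
      have hnum : padicValInt p x.num = 0 := by
        apply padicValInt.eq_zero_of_not_dvd
        intro hdvd
        have h1 : p ∣ x.num.natAbs := Int.natAbs_dvd_natAbs.mpr (by exact_mod_cast hdvd)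
        have h2 : p ∣ Nat.gcd x.num.natAbs x.den := Nat.dvd_gcd h1 hpd
        rw [Nat.Coprime.gcd_eq_one x.reduced] at h2
        exact hp.one_lt.ne' (Nat.eq_one_of_dvd_one h2)
      have hv : padicValRat p x = padicValInt p x.num - padicValNat p x.den := rfl
      have h2 : 1 ≤ padicValNat p x.den :=
        one_le_padicValNat_of_dvd x.den_pos.ne' hpd
      omega
    exact ⟨x.den.primeFactorsList.length,
      Nat.eq_prime_pow_of_unique_prime_dvd x.den_nz (fun hd hdvd => hden _ hd hdvd)⟩
  · intro q hq _
    exact bernoulli_div_factorial_val hq (2 * r)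
end
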